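/- For every integer N ≥ 2 and every σ > 0, the quantity (N−1)/N + ∑_{n=1}^∞ e^{-n/σ}/((n+N)(n+N−1)) equals 1 − ∫_0^∞ e^{-x}/(⌊σx⌋ + N) dx, and satisfies (N−1)/N + ∑_{n=1}^∞ e^{-n/σ}/((n+N)(n+N−1)) = 1 + O((log σ)/σ) as σ → ∞. -/

import Mathlib

open Real MeasureTheory Filter Set

set_option maxHeartbeats 1000000

private lemma hasSum_telescope' {f : ℕ → ℝ} (hmono : ∀ n, f (n+1) ≤ f n)
    (h0 : Filter.Tendsto f atTop (nhds 0)) :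
    HasSum (fun n => f n - f (n+1)) (f 0) := by
  rw [hasSum_iff_tendsto_nat_of_nonneg (fun n => sub_nonneg.2 (hmono n))]
  simp only [Finset.sum_range_sub' f]
  simpa using tendsto_const_nhds.sub h0

private lemma aux_integral (N : ℕ) (hN : 2 ≤ N) {σ : ℝ} (hσ : 0 < σ) :
    ∫ x in Set.Ioi (0:ℝ), exp (-x) / ((⌊σ * x⌋ : ℝ) + N) =
    ∑' n : ℕ, (exp (-(n:ℝ)/σ) - exp (-((n:ℝ)+1)/σ)) / ((n:ℝ) + N) := by
  have hN' : (2:ℝ) ≤ N := by exact_mod_cast hN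
  have hNpos : (0:ℝ) < N := by linarith
  set s : ℕ → Set ℝ := fun n => Set.Ico ((n:ℝ)/σ) (((n:ℝ)+1)/σ) with hs
  set F : ℝ → ℝ := fun x => exp (-x) / ((⌊σ * x⌋ : ℝ) + N) with hF
  have hU : Set.Ici (0:ℝ) = ⋃ n : ℕ, s n := by
    ext x
    simp only [Set.mem_Ici, Set.mem_iUnion, hs, Set.mem_Ico]
    constructor
    · intro hx
      have hnn : (0:ℤ) ≤ ⌊σ * x⌋ := Int.floor_nonneg.2 (by positivity)
      have hcast : ((⌊σ * x⌋.toNat : ℕ) : ℝ) = ((⌊σ * x⌋ : ℤ) : ℝ) := by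
        exact_mod_cast congrArg (fun z : ℤ => (z:ℝ)) (Int.toNat_of_nonneg hnn)
      refine ⟨⌊σ * x⌋.toNat, ?_, ?_⟩
      · rw [div_le_iff₀ hσ, hcast, mul_comm]
        exact Int.floor_le _
      · rw [lt_div_iff₀ hσ, hcast, mul_comm]
        linarith [Int.lt_floor_add_one (σ * x)]
    · rintro ⟨n, h1, _⟩
      exact le_trans (by positivity) h1
  have hmeasF : Measurable F := by
    apply Measurable.div (by fun_prop)
    exact (measurable_from_top.comp ((measurable_const.mul measurable_id).floor)).add
      measurable_const
  have hdenom : ∀ x : ℝ, 0 ≤ x → (1:ℝ) ≤ (⌊σ * x⌋ : ℝ) + N := by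
    intro x hx
    have : (0:ℝ) ≤ (⌊σ * x⌋ : ℝ) := by exact_mod_cast Int.floor_nonneg.2 (by positivity)
    linarith
  have hInt : IntegrableOn F (Set.Ici 0) := by
    apply Integrable.mono' (g := fun x => exp (-x))
    · show IntegrableOn _ _ _
      rw [integrableOn_Ici_iff_integrableOn_Ioi]
      simpa using exp_neg_integrableOn_Ioi (0:ℝ) one_pos
    · exact hmeasF.aestronglyMeasurable
    · filter_upwards [ae_restrict_mem measurableSet_Ici] with x hx
      rw [hF, Real.norm_eq_abs, abs_div, abs_of_nonneg (exp_nonneg _),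
        abs_of_nonneg (by linarith [hdenom x hx])]
      exact div_le_self (exp_nonneg _) (hdenom x hx)
  have hdisj : Pairwise (Function.onFun Disjoint s) := by
    intro m n hmn
    simp only [Function.onFun, hs]
    rw [Set.Ico_disjoint_Ico]
    rcases hmn.lt_or_gt with h | h
    · refine le_trans (min_le_left _ _) (le_trans ?_ (le_max_right _ _))
      gcongr
      exact_mod_cast h
    · refine le_trans (min_le_right _ _) (le_trans ?_ (le_max_left _ _))
      gcongr
      exact_mod_cast h
  have key : ∀ n : ℕ, ∫ x in s n, F x =
      (exp (-(n:ℝ)/σ) - exp (-((n:ℝ)+1)/σ)) / ((n:ℝ) + N) := by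
    intro n
    have hcongr : ∫ x in s n, F x = ∫ x in s n, exp (-x) / ((n:ℝ) + N) := by
      apply setIntegral_congr_fun (by exact measurableSet_Ico)
      intro x hx
      simp only [Set.mem_Ico, hs] at hx
      have hfl : ⌊σ * x⌋ = (n : ℤ) := by
        apply Int.floor_eq_iff.2
        constructor
        · push_cast
          rw [mul_comm]
          exact (div_le_iff₀ hσ).1 hx.1
        · push_cast
          rw [mul_comm]
          exact (lt_div_iff₀ hσ).1 hx.2
      rw [hF]
      simp [hfl]
    rw [hcongr]
    have hle : (n:ℝ)/σ ≤ ((n:ℝ)+1)/σ := by gcongr; linarith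
    rw [hs]
    simp only
    rw [setIntegral_congr_set Ico_ae_eq_Ioc, ← intervalIntegral.integral_of_le hle,
      intervalIntegral.integral_div]
    have : (∫ x in ((n:ℝ)/σ)..(((n:ℝ)+1)/σ), exp (-x)) =
        exp (-((n:ℝ)/σ)) - exp (-(((n:ℝ)+1)/σ)) := by
      rw [intervalIntegral.integral_comp_neg (fun x => exp x), integral_exp]
    rw [this]
    ring_nf
  calc ∫ x in Set.Ioi (0:ℝ), F x = ∫ x in Set.Ici (0:ℝ), F x :=
        (integral_Ici_eq_integral_Ioi).symm
    _ = ∫ x in ⋃ n : ℕ, s n, F x := by rw [hU]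
    _ = ∑' n : ℕ, ∫ x in s n, F x := integral_iUnion (fun n => measurableSet_Ico) hdisj
          (hU ▸ hInt)
    _ = _ := by
        apply tsum_congr
        intro n
        rw [key n]

private lemma aux_identity (N : ℕ) (hN : 2 ≤ N) {σ : ℝ} (hσ : 0 < σ)
    (hint : ∫ x in Set.Ioi (0:ℝ), exp (-x) / ((⌊σ * x⌋ : ℝ) + N) =
      ∑' n : ℕ, (exp (-(n:ℝ)/σ) - exp (-((n:ℝ)+1)/σ)) / ((n:ℝ) + N)) :
    ((N : ℝ) - 1) / N +
        ∑' n : ℕ, exp (-((n : ℝ) + 1) / σ) / (((n : ℝ) + 1 + N) * ((n : ℝ) + N)) =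
      1 - ∫ x in Set.Ioi (0:ℝ), exp (-x) / ((⌊σ * x⌋ : ℝ) + N) := by
  have hN' : (2:ℝ) ≤ N := by exact_mod_cast hN
  have hNpos : (0:ℝ) < N := by linarith
  set b : ℕ → ℝ := fun n => exp (-((n : ℝ) + 1) / σ) / (((n : ℝ) + 1 + N) * ((n : ℝ) + N))
    with hb
  set f : ℕ → ℝ := fun n => exp (-(n:ℝ)/σ) / ((n:ℝ) + N) with hf
  have hr1 : exp (-(1/σ)) < 1 := exp_lt_one_iff.2 (by simp; positivity)
  have hrexp : ∀ n : ℕ, exp (-(n:ℝ)/σ) = exp (-(1/σ)) ^ n := by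
    intro n
    rw [← Real.exp_nat_mul]
    congr 1
    field_simp
  have hbound : ∀ n : ℕ, b n ≤ exp (-(1/σ)) ^ n := by
    intro n
    rw [hb, ← hrexp]
    have h1 : (1:ℝ) ≤ ((n : ℝ) + 1 + N) * ((n : ℝ) + N) := by nlinarith [Nat.cast_nonneg (α := ℝ) n]
    have h2 : exp (-((n:ℝ)+1)/σ) ≤ exp (-(n:ℝ)/σ) := by
      apply exp_le_exp.2
      gcongr
      linarith
    calc exp (-((n:ℝ)+1)/σ) / (((n : ℝ) + 1 + N) * ((n : ℝ) + N)) ≤ exp (-((n:ℝ)+1)/σ) :=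
          div_le_self (exp_nonneg _) h1
      _ ≤ _ := h2
  have hb_sum : Summable b :=
    Summable.of_nonneg_of_le (fun n => by positivity) hbound
      (summable_geometric_of_lt_one (exp_nonneg _) hr1)
  have hf_mono : ∀ n : ℕ, f (n+1) ≤ f n := by
    intro n
    rw [hf]
    simp only [Nat.cast_add, Nat.cast_one]
    apply div_le_div₀ (exp_nonneg _) ?_ (by positivity) (by linarith [Nat.cast_nonneg (α := ℝ) n])
    apply exp_le_exp.2
    have : (0:ℝ) ≤ (n:ℝ) := Nat.cast_nonneg n
    gcongr
    linarith
  have hf_lim : Filter.Tendsto f atTop (nhds 0) := by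
    apply squeeze_zero (fun n => by positivity) (g := fun n => exp (-(1/σ)) ^ n)
    · intro n
      simp only [hf, ← hrexp n]
      apply div_le_self (exp_nonneg _)
      linarith [Nat.cast_nonneg (α := ℝ) n]
    · exact tendsto_pow_atTop_nhds_zero_of_lt_one (exp_nonneg _) hr1
  have hf0 : f 0 = 1 / N := by
    rw [hf]; norm_num
  have hg : HasSum (fun n : ℕ => (exp (-(n:ℝ)/σ) - exp (-((n:ℝ)+1)/σ)) / ((n:ℝ) + N))
      (1/N - ∑' n, b n) := by
    have h1 : HasSum (fun n => f n - f (n+1)) (1/N) := hf0 ▸ hasSum_telescope' hf_mono hf_lim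
    have h2 := h1.sub hb_sum.hasSum
    have heq : (fun n : ℕ => (exp (-(n:ℝ)/σ) - exp (-((n:ℝ)+1)/σ)) / ((n:ℝ) + N)) =
        fun n : ℕ => (f n - f (n+1)) - b n := by
      funext n
      have hd1 : ((n:ℝ) + N) ≠ 0 := by positivity
      have hd2 : ((n:ℝ) + 1 + N) ≠ 0 := by positivity
      rw [hf, hb]
      simp only [Nat.cast_add, Nat.cast_one]
      field_simp
      ring
    rw [heq]
    exact h2
  rw [hint, hg.tsum_eq]
  field_simp
  ring

private lemma aux_bound (N : ℕ) (hN : 2 ≤ N) {σ : ℝ} (hσ2 : 2 ≤ σ) :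
    |(((N : ℝ) - 1) / N +
        ∑' n : ℕ, exp (-((n : ℝ) + 1) / σ) / (((n : ℝ) + 1 + N) * ((n : ℝ) + N))) - 1|
      ≤ 4 * (log σ / σ) := by
  have hσ : (0:ℝ) < σ := by linarith
  have hN' : (2:ℝ) ≤ N := by exact_mod_cast hN
  have hNpos : (0:ℝ) < N := by linarith
  set x : ℝ := exp (-(1/σ)) with hx
  have hx0 : 0 < x := exp_pos _
  have hx1 : x < 1 := exp_lt_one_iff.2 (by simp; positivity)
  -- x ≥ 1 - 1/σ ≥ 1/2
  have hxlb : 1 - 1/σ ≤ x := by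
    have := Real.add_one_le_exp (-(1/σ))
    linarith
  have hxhalf : (1:ℝ)/2 ≤ x := by
    have : 1/σ ≤ 1/2 := by
      rw [div_le_div_iff₀ hσ (by norm_num)]; linarith
    linarith
  -- 1 - x bounds
  have h1x_ub : 1 - x ≤ 1/σ := by linarith
  have h1x_lb : 1/(2*σ) ≤ 1 - x := by
    have hexp : 1 + 1/σ ≤ exp (1/σ) := by
      have := Real.add_one_le_exp (1/σ); linarith
    have hxle : x ≤ σ/(σ+1) := by
      rw [hx, exp_neg, inv_le_comm₀ (exp_pos _) (by positivity)]
      calc (σ/(σ+1))⁻¹ = 1 + 1/σ := by rw [inv_div]; field_simp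
        _ ≤ exp (1/σ) := hexp
    have : 1 - σ/(σ+1) = 1/(σ+1) := by field_simp; ring
    have h2 : 1/(2*σ) ≤ 1/(σ+1) := by
      rw [div_le_div_iff₀ (by positivity) (by positivity)]; linarith
    linarith
  set L : ℝ := -Real.log (1 - x) with hL
  have h1xpos : 0 < 1 - x := by linarith
  have hL0 : 0 ≤ L := by
    rw [hL, neg_nonneg]
    exact Real.log_nonpos (by linarith) (by linarith)
  have hLle : L ≤ 2 * Real.log σ := by
    have h1 : Real.log (1/(2*σ)) ≤ Real.log (1-x) := Real.log_le_log (by positivity) h1x_lb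
    have h2 : Real.log (1/(2*σ)) = -(Real.log 2 + Real.log σ) := by
      rw [one_div, Real.log_inv, Real.log_mul (by norm_num) (by positivity)]
    have h3 : Real.log 2 ≤ Real.log σ := Real.log_le_log (by norm_num) hσ2
    rw [hL]
    linarith
  have habs : |x| < 1 := by rw [abs_of_pos hx0]; exact hx1
  have hA : HasSum (fun n : ℕ => x ^ (n+1) / ((n:ℝ)+1)) L :=
    Real.hasSum_pow_div_log_of_abs_lt_one habs
  have hA1 : HasSum (fun n : ℕ => x ^ (n+2) / ((n:ℝ)+2)) (L - x) := by
    have hA' : HasSum (fun m : ℕ => x ^ (m+1) / ((m:ℝ)+1))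
        ((L - x) + ∑ i ∈ Finset.range 1, x ^ (i+1) / ((i:ℝ)+1)) := by
      have hv : (L - x) + ∑ i ∈ Finset.range 1, x ^ (i+1) / ((i:ℝ)+1) = L := by simp
      rw [hv]; exact hA
    have h : HasSum (fun n : ℕ => (fun m : ℕ => x ^ (m+1) / ((m:ℝ)+1)) (n + 1)) (L - x) :=
      (hasSum_nat_add_iff 1).2 hA'
    have heq : (fun n : ℕ => (fun m : ℕ => x ^ (m+1) / ((m:ℝ)+1)) (n + 1)) =
        fun n : ℕ => x ^ (n+2) / ((n:ℝ)+2) := by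
      funext n; push_cast; ring_nf
    rwa [heq] at h
  have hB : HasSum (fun n : ℕ => x^(n+1) / (((n:ℝ)+1)*((n:ℝ)+2))) (L - (L - x)/x) := by
    have h := hA.sub (hA1.div_const x)
    have heq : (fun n : ℕ => x^(n+1)/(((n:ℝ)+1)*((n:ℝ)+2))) =
        fun n : ℕ => x^(n+1)/((n:ℝ)+1) - (x^(n+2)/((n:ℝ)+2))/x := by
      funext n
      have h1 : ((n:ℝ)+1) ≠ 0 := by positivity
      have h2 : ((n:ℝ)+2) ≠ 0 := by positivity
      field_simp
      ring
    rwa [heq]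
  have hC1 : HasSum (fun n : ℕ => 1 / (((n:ℝ)+1)*((n:ℝ)+2))) 1 := by
    have htel := hasSum_telescope' (f := fun n : ℕ => 1/((n:ℝ)+1)) ?_ ?_
    · have heq : (fun n : ℕ => (fun m : ℕ => 1/((m:ℝ)+1)) n - (fun m : ℕ => 1/((m:ℝ)+1)) (n+1)) =
          fun n : ℕ => 1 / (((n:ℝ)+1)*((n:ℝ)+2)) := by
        funext n
        have h1 : ((n:ℝ)+1) ≠ 0 := by positivity
        have h2 : ((n:ℝ)+2) ≠ 0 := by positivity
        push_cast
        field_simp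
        ring_nf
      rw [heq] at htel
      simpa using htel
    · intro n
      gcongr <;> push_cast <;> linarith
    · apply squeeze_zero (fun n => by positivity) (g := fun n : ℕ => 1/((n:ℝ)+1))
      · intro n; simp
      · exact tendsto_one_div_add_atTop_nhds_zero_nat
  have hD : HasSum (fun n : ℕ => (1 - x^(n+1)) / (((n:ℝ)+1)*((n:ℝ)+2))) (L*(1-x)/x) := by
    have h := hC1.sub hB
    have heq : (fun n : ℕ => (1 - x^(n+1)) / (((n:ℝ)+1)*((n:ℝ)+2))) =
        fun n : ℕ => 1/(((n:ℝ)+1)*((n:ℝ)+2)) - x^(n+1)/(((n:ℝ)+1)*((n:ℝ)+2)) := by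
      funext n; rw [sub_div]
    have hval : (1:ℝ) - (L - (L - x)/x) = L*(1-x)/x := by
      field_simp
      ring
    rw [heq]
    rwa [hval] at h
  -- statement-side series
  set b : ℕ → ℝ := fun n => exp (-((n : ℝ) + 1) / σ) / (((n : ℝ) + 1 + N) * ((n : ℝ) + N))
    with hb
  set c : ℕ → ℝ := fun n => 1 / (((n : ℝ) + 1 + N) * ((n : ℝ) + N)) with hc
  have hxb : ∀ n : ℕ, exp (-((n:ℝ)+1)/σ) = x^(n+1) := by
    intro n
    rw [hx, ← Real.exp_nat_mul]
    congr 1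
    push_cast
    field_simp
  have hbc : ∀ n : ℕ, b n ≤ c n := by
    intro n
    rw [hb, hc]
    simp only
    rw [hxb n]
    have hD : (0:ℝ) < ((n:ℝ)+1+N)*((n:ℝ)+N) := by positivity
    exact (div_le_div_iff_of_pos_right hD).2 (pow_le_one₀ (le_of_lt hx0) (le_of_lt hx1))
  have hc_sum : HasSum c (1/N) := by
    have htel := hasSum_telescope' (f := fun n : ℕ => 1/((n:ℝ)+N)) ?_ ?_
    · have heq : (fun n : ℕ => (fun m : ℕ => 1/((m:ℝ)+N)) n - (fun m : ℕ => 1/((m:ℝ)+N)) (n+1)) =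
          c := by
        funext n
        have h1 : ((n:ℝ)+N) ≠ 0 := by positivity
        have h2 : ((n:ℝ)+1+N) ≠ 0 := by positivity
        rw [hc]
        have h3 : ((n:ℝ)+1) + N = ((n:ℝ)+N) + 1 := by ring
        push_cast
        field_simp
        ring
      rw [heq] at htel
      convert htel using 2
      norm_num
    · intro n
      apply one_div_le_one_div_of_le (by positivity)
      push_cast
      linarith
    · apply squeeze_zero (fun n => by positivity) (g := fun n : ℕ => 1/((n:ℝ)+1))
      · intro n
        apply one_div_le_one_div_of_le (by positivity)
        linarith
      · exact tendsto_one_div_add_atTop_nhds_zero_nat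
  have hb_sum : Summable b := by
    apply Summable.of_nonneg_of_le (fun n => by positivity) hbc hc_sum.summable
  have hcb_le : ∀ n : ℕ, c n - b n ≤ (1 - x^(n+1)) / (((n:ℝ)+1)*((n:ℝ)+2)) := by
    intro n
    rw [hb, hc]
    simp only
    rw [hxb n, div_sub_div_same]
    gcongr
    · linarith [pow_le_one₀ (le_of_lt hx0) (le_of_lt hx1) (n := n+1)]
    · linarith [Nat.cast_nonneg (α := ℝ) n]
    · linarith
  have hsum_le : ∑' n, (c n - b n) ≤ L*(1-x)/x := by
    rw [← hD.tsum_eq]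
    exact Summable.tsum_le_tsum hcb_le (hc_sum.summable.sub hb_sum) hD.summable
  have htsub : ∑' n, (c n - b n) = 1/N - ∑' n, b n := by
    rw [Summable.tsum_sub hc_sum.summable hb_sum, hc_sum.tsum_eq]
  have hble : ∑' n, b n ≤ 1/N := by
    rw [← hc_sum.tsum_eq]
    exact Summable.tsum_le_tsum hbc hb_sum hc_sum.summable
  -- final numeric bound
  have hinvx : 1/x ≤ 2 := by
    rw [div_le_iff₀ hx0]; linarith
  have hlogσ : 0 ≤ Real.log σ := Real.log_nonneg (by linarith)
  have hfinal : L*(1-x)/x ≤ 4 * (Real.log σ / σ) := by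
    rw [div_eq_mul_one_div (L*(1-x)) x]
    calc L*(1-x)*(1/x) ≤ (2*Real.log σ * (1/σ)) * 2 := by
          apply mul_le_mul ?_ hinvx (by positivity) (by positivity)
          exact mul_le_mul hLle h1x_ub (by linarith) (by linarith)
      _ = 4 * (Real.log σ / σ) := by ring
  have hexpr : (((N : ℝ) - 1) / N +
      ∑' n : ℕ, exp (-((n : ℝ) + 1) / σ) / (((n : ℝ) + 1 + N) * ((n : ℝ) + N))) - 1
      = -(1/N - ∑' n, b n) := by
    rw [hb]
    have : ((N:ℝ)-1)/N = 1 - 1/N := by field_simp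
    rw [this]
    ring
  rw [hexpr, abs_neg, abs_of_nonneg (by rw [← htsub]; exact tsum_nonneg (fun n => sub_nonneg.2 (hbc n)))]
  calc 1/(N:ℝ) - ∑' n, b n = ∑' n, (c n - b n) := htsub.symm
    _ ≤ L*(1-x)/x := hsum_le
    _ ≤ 4 * (Real.log σ / σ) := hfinal

theorem return_sum_asymptotics (N : ℕ) (hN : 2 ≤ N) :
    (∀ σ > (0:ℝ),
      ((N : ℝ) - 1) / N +
          ∑' n : ℕ, exp (-((n : ℝ) + 1) / σ) / (((n : ℝ) + 1 + N) * ((n : ℝ) + N)) =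
        1 - ∫ x in Set.Ioi (0:ℝ), exp (-x) / ((⌊σ * x⌋ : ℝ) + N)) ∧
    (fun σ : ℝ =>
        (((N : ℝ) - 1) / N +
          ∑' n : ℕ, exp (-((n : ℝ) + 1) / σ) / (((n : ℝ) + 1 + N) * ((n : ℝ) + N))) - 1)
      =O[atTop] fun σ => Real.log σ / σ := by
  constructor
  · intro σ hσ
    exact aux_identity N hN hσ (aux_integral N hN hσ)
  · rw [Asymptotics.isBigO_iff]
    refine ⟨4, ?_⟩
    filter_upwards [eventually_ge_atTop (2:ℝ)] with σ hσ2
    have h := aux_bound N hN hσ2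
    rw [Real.norm_eq_abs, Real.norm_eq_abs]
    have hpos : 0 ≤ Real.log σ / σ :=
      div_nonneg (Real.log_nonneg (by linarith)) (by linarith)
    calc |(((N : ℝ) - 1) / N +
          ∑' n : ℕ, exp (-((n : ℝ) + 1) / σ) / (((n : ℝ) + 1 + N) * ((n : ℝ) + N))) - 1|
        ≤ 4 * (Real.log σ / σ) := h
      _ = 4 * |Real.log σ / σ| := by rw [abs_of_nonneg hpos]
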